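/- Let a = (a_1, …, a_d) ∈ ℝ^d be a nonzero vector, c ∈ ℝ, and K = {x ∈ ℝ^d : ∑_i a_i x_i = c}. Then the image φ(K) of K under the quotient map φ : ℝ^d → T^d = ℝ^d/ℤ^d is a closed subset of T^d if and only if for all indices i, j with a_j ≠ 0 the ratio a_i/a_j is rational. -/

import Mathlib

open scoped BigOperators

noncomputable section

/-- The flat `d`-dimensional torus `ℝ^d / ℤ^d`, modeled as a product of circles `ℝ/ℤ`. -/
abbrev FlatTorus (d : ℕ) := Fin d → AddCircle (1 : ℝ)

/-- The quotient map `φ : ℝ^d → T^d`. -/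
def torusQuot (d : ℕ) : (Fin d → ℝ) → FlatTorus d := fun x i => (x i : AddCircle (1 : ℝ))

/-- A closed codimension-one subtorus of `T^d`: the image under `φ` of an affine hyperplane
`{x | ∑ i, a i * x i = c}` with `a` a primitive integer vector. -/
def IsCodimOneSubtorus {d : ℕ} (A : Set (FlatTorus d)) : Prop :=
  ∃ (a : Fin d → ℤ) (c : ℝ),
    Finset.univ.gcd a = 1 ∧
    A = torusQuot d '' {x | ∑ i, (a i : ℝ) * x i = c}

/-- Bezout for finite families of integers. -/
lemma bezout_finset {ι : Type*} [DecidableEq ι] (s : Finset ι) (m : ι → ℤ) :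
    ∃ n : ι → ℤ, ∑ i ∈ s, m i * n i = s.gcd m := by
  classical
  induction s using Finset.induction_on with
  | empty => exact ⟨0, by simp⟩
  | @insert a s ha ih =>
    obtain ⟨n, hn⟩ := ih
    refine ⟨Function.update (fun i => n i * (m a).gcdB (s.gcd m)) a ((m a).gcdA (s.gcd m)), ?_⟩
    rw [Finset.sum_insert ha, Function.update_self, Finset.gcd_insert]
    have h1 : ∑ i ∈ s, m i * Function.update (fun i => n i * (m a).gcdB (s.gcd m)) a
        ((m a).gcdA (s.gcd m)) i = ∑ i ∈ s, m i * (n i * (m a).gcdB (s.gcd m)) := by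
      refine Finset.sum_congr rfl fun i hi => ?_
      rw [Function.update_of_ne (by rintro rfl; exact ha hi)]
    rw [h1]
    have h2 : ∑ i ∈ s, m i * (n i * (m a).gcdB (s.gcd m)) =
        (∑ i ∈ s, m i * n i) * (m a).gcdB (s.gcd m) := by
      rw [Finset.sum_mul]; exact Finset.sum_congr rfl fun i _ => by ring
    rw [h2, hn]
    have h3 := Int.gcd_eq_gcd_ab (m a) (s.gcd m)
    have h4 : (gcd (m a) (s.gcd m) : ℤ) = ((m a).gcd (s.gcd m) : ℤ) := by
      rw [Int.coe_gcd]
    omega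

lemma dense_int_combo {α : ℝ} (hα : Irrational α) :
    Dense {x : ℝ | ∃ p q : ℤ, x = p * α + q} := by
  set T : AddSubgroup ℝ :=
    { carrier := {x : ℝ | ∃ p q : ℤ, x = p * α + q}
      zero_mem' := ⟨0, 0, by simp⟩
      add_mem' := by
        rintro x y ⟨p, q, rfl⟩ ⟨p', q', rfl⟩
        exact ⟨p + p', q + q', by push_cast; ring⟩
      neg_mem' := by
        rintro x ⟨p, q, rfl⟩
        exact ⟨-p, -q, by push_cast; ring⟩ } with hT
  have h1 : (1 : ℝ) ∈ T := ⟨0, 1, by simp⟩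
  have h2 : α ∈ T := ⟨1, 0, by simp⟩
  rcases T.dense_or_cyclic with h | ⟨g, hg⟩
  · exact h
  · exfalso
    rw [hg, AddSubgroup.mem_closure_singleton] at h1 h2
    obtain ⟨n, hn⟩ := h1
    obtain ⟨k, hk⟩ := h2
    have hg0 : g ≠ 0 := by rintro rfl; simp at hn
    have hn0 : (n : ℝ) ≠ 0 := by
      rintro h; rw [zsmul_eq_mul, h, zero_mul] at hn; exact one_ne_zero hn.symm
    refine hα ⟨(k : ℚ) / (n : ℚ), ?_⟩
    rw [zsmul_eq_mul] at hn hk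
    have : g = 1 / n := by field_simp at hn ⊢; linarith [hn]
    rw [this] at hk
    push_cast
    rw [← hk]; field_simp

lemma coe_sum_mul (d : ℕ) (b : Fin d → ℤ) (x : Fin d → ℝ) :
    ((∑ i, (b i : ℝ) * x i : ℝ) : AddCircle (1:ℝ)) = ∑ i, b i • ((x i : AddCircle (1:ℝ))) := by
  have : ((∑ i, (b i : ℝ) * x i : ℝ) : AddCircle (1:ℝ)) =
      ∑ i, (((b i : ℝ) * x i : ℝ) : AddCircle (1:ℝ)) := by
    exact map_sum (QuotientAddGroup.mk' _) _ _
  rw [this]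
  refine Finset.sum_congr rfl fun i _ => ?_
  have : ((b i : ℝ) * x i : ℝ) = b i • (x i : ℝ) := by rw [zsmul_eq_mul]
  rw [this]
  exact map_zsmul (QuotientAddGroup.mk' (AddSubgroup.zmultiples (1:ℝ))) _ _

lemma isClosed_of_int_vector (d : ℕ) (b : Fin d → ℤ) (n : Fin d → ℤ)
    (hbn : ∑ i, b i * n i = 1) (c' : ℝ) :
    IsClosed (torusQuot d '' {x | ∑ i, (b i : ℝ) * x i = c'}) := by
  haveI : Fact ((0:ℝ) < 1) := ⟨one_pos⟩
  set F : FlatTorus d → AddCircle (1:ℝ) := fun y => ∑ i, b i • y i with hF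
  have hFc : Continuous F := by
    apply continuous_finset_sum
    intro i _
    exact (continuous_zsmul (b i)).comp (continuous_apply i)
  have key : torusQuot d '' {x | ∑ i, (b i : ℝ) * x i = c'} = F ⁻¹' {((c' : ℝ) : AddCircle (1:ℝ))} := by
    ext y
    constructor
    · rintro ⟨x, hx, rfl⟩
      simp only [Set.mem_preimage, Set.mem_singleton_iff, hF, torusQuot]
      rw [← coe_sum_mul, hx]
    · intro hy
      simp only [Set.mem_preimage, Set.mem_singleton_iff, hF] at hy
      choose x hx using fun i => QuotientAddGroup.mk_surjective (y i)
      have hyx : y = torusQuot d x := by funext i; exact (hx i).symm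
      rw [hyx] at hy ⊢
      rw [show (∑ i, b i • torusQuot d x i) = ((∑ i, (b i:ℝ) * x i : ℝ) : AddCircle (1:ℝ)) from
        (coe_sum_mul d b x).symm] at hy
      have : ((∑ i, (b i:ℝ) * x i - c' : ℝ) : AddCircle (1:ℝ)) = 0 := by
        rw [sub_eq_add_neg]
        rw [show (((∑ i, (b i:ℝ) * x i) + -c' : ℝ) : AddCircle (1:ℝ)) =
          ((∑ i, (b i:ℝ) * x i : ℝ) : AddCircle (1:ℝ)) + ((-c' : ℝ) : AddCircle (1:ℝ)) from rfl]
        rw [hy]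
        rw [show (((-c') : ℝ) : AddCircle (1:ℝ)) = -((c' : ℝ) : AddCircle (1:ℝ)) from rfl]
        exact add_neg_cancel _
      rw [AddCircle.coe_eq_zero_iff] at this
      obtain ⟨z, hz⟩ := this
      rw [zsmul_eq_mul, mul_one] at hz
      refine ⟨fun i => x i - z * n i, ?_, ?_⟩
      · simp only [Set.mem_setOf_eq]
        have hsum : ∑ i, (b i:ℝ) * (x i - z * n i)
            = ∑ i, (b i:ℝ) * x i - z * ∑ i, ((b i : ℝ) * (n i : ℝ)) := by
          rw [Finset.mul_sum, ← Finset.sum_sub_distrib]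
          refine Finset.sum_congr rfl fun i _ => by ring
        rw [hsum]
        have : ∑ i, ((b i : ℝ) * (n i : ℝ)) = 1 := by
          have h' : ((∑ i, b i * n i : ℤ) : ℝ) = 1 := by rw [hbn]; norm_num
          push_cast at h'
          exact h'
        rw [this, mul_one, hz]; ring
      · funext i
        simp only [torusQuot]
        have : ((x i - z * n i : ℝ) : AddCircle (1:ℝ)) = ((x i : ℝ) : AddCircle (1:ℝ)) -
            ((z * n i : ℝ) : AddCircle (1:ℝ)) := rfl
        rw [this]
        have hz0 : ((z * n i : ℝ) : AddCircle (1:ℝ)) = 0 := by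
          rw [AddCircle.coe_eq_zero_iff]
          exact ⟨z * n i, by push_cast [zsmul_eq_mul]; ring⟩
        rw [hz0, sub_zero]
  rw [key]
  exact (isClosed_singleton).preimage hFc

lemma rational_ratios_to_int_vector (d : ℕ) (a : Fin d → ℝ) (ha : a ≠ 0)
    (h : ∀ i j, a j ≠ 0 → ∃ q : ℚ, a i / a j = (q : ℝ)) :
    ∃ (b : Fin d → ℤ) (n : Fin d → ℤ) (s : ℝ), s ≠ 0 ∧ (∀ i, a i = s * b i) ∧
      ∑ i, b i * n i = 1 := by
  classical
  obtain ⟨j0, hj0⟩ := Function.ne_iff.mp ha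
  rw [Pi.zero_apply] at hj0
  choose q hq using fun i => h i j0 hj0
  have haq : ∀ i, a i = (q i : ℝ) * a j0 := fun i => by
    rw [← hq i]; field_simp
  set N : ℕ := Finset.univ.lcm fun i => (q i).den with hN
  have hNden : ∀ i, (q i).den ∣ N := fun i => Finset.dvd_lcm (Finset.mem_univ i)
  have hN0 : N ≠ 0 := by
    rw [hN]
    intro h0
    rw [Finset.lcm_eq_zero_iff] at h0
    obtain ⟨i, -, hi⟩ := h0
    exact (q i).den_nz (by simpa using hi)
  set m : Fin d → ℤ := fun i => (q i).num * ((N / (q i).den : ℕ) : ℤ) with hm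
  set t : ℝ := a j0 / N with ht
  have ht0 : t ≠ 0 := div_ne_zero hj0 (by exact_mod_cast hN0)
  have htm : ∀ i, a i = t * m i := by
    intro i
    have hcast : ((m i : ℤ) : ℝ) = (q i).num * ((N:ℝ) / ((q i).den:ℝ)) := by
      rw [hm]
      simp only [Int.cast_mul, Int.cast_natCast]
      rw [Nat.cast_div (hNden i) (Nat.cast_ne_zero.mpr (q i).den_nz)]
    rw [haq i, hcast, Rat.cast_def, ht]
    have hden : ((q i).den : ℝ) ≠ 0 := by exact_mod_cast (q i).den_nz
    have hNr : (N : ℝ) ≠ 0 := by exact_mod_cast hN0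
    field_simp
  have hmj0 : m j0 ≠ 0 := by
    intro h0
    rw [htm j0, h0] at hj0
    simp at hj0
  set g : ℤ := Finset.univ.gcd m with hg
  have hg0 : g ≠ 0 := by
    rw [hg]
    intro h0
    rw [Finset.gcd_eq_zero_iff] at h0
    exact hmj0 (h0 j0 (Finset.mem_univ j0))
  set b : Fin d → ℤ := fun i => m i / g with hb
  have hmb : ∀ i, m i = g * b i := fun i =>
    (Int.mul_ediv_cancel' (Finset.gcd_dvd (Finset.mem_univ i))).symm
  obtain ⟨n, hn⟩ := bezout_finset Finset.univ m
  refine ⟨b, n, t * (g : ℝ), ?_, ?_, ?_⟩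
  · exact mul_ne_zero ht0 (by exact_mod_cast hg0)
  · intro i
    rw [htm i, hmb i]
    push_cast
    ring
  · have h1 : g * ∑ i, b i * n i = ∑ i, m i * n i := by
      rw [Finset.mul_sum]
      exact Finset.sum_congr rfl fun i _ => by rw [hmb i]; ring
    have h2 : g * ∑ i, b i * n i = g := by rw [h1, hn, ← hg]
    exact mul_left_cancel₀ hg0 (by rw [h2, mul_one])

lemma forward_dir (d : ℕ) (a : Fin d → ℝ) (c : ℝ) (i j : Fin d) (haj : a j ≠ 0)
    (hirr : ¬∃ q : ℚ, a i / a j = (q : ℝ))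
    (hcl : IsClosed (torusQuot d '' {x | ∑ k, a k * x k = c})) : False := by
  classical
  haveI : Fact ((0:ℝ) < 1) := ⟨one_pos⟩
  set α : ℝ := a i / a j with hαdef
  have hai : a i ≠ 0 := by
    rintro h
    exact hirr ⟨0, by simp [hαdef, h]⟩
  have hij : i ≠ j := by
    rintro rfl
    exact hirr ⟨1, by simp [hαdef, div_self haj]⟩
  have hα : Irrational α := by
    rw [Irrational]
    rintro ⟨q, hq⟩
    exact hirr ⟨q, hq.symm⟩
  -- Step 1: for every r, the point y r lies in the image
  have key : ∀ r : ℝ, (fun k => if k = i then ((r : ℝ) : AddCircle (1:ℝ)) else 0)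
      ∈ torusQuot d '' {x | ∑ k, a k * x k = c} := by
    intro r
    set β : ℝ := (c - a i * r) / a j with hβdef
    set g : AddCircle (1:ℝ) → FlatTorus d :=
      fun t k => if k = i then ((r : ℝ) : AddCircle (1:ℝ)) else if k = j then t else 0 with hg
    have hgc : Continuous g := by
      apply continuous_pi
      intro k
      by_cases hk : k = i
      · simp only [hg, hk, if_pos]; exact continuous_const
      · by_cases hk' : k = j
        · subst hk'; simp only [hg, if_neg hk, if_pos]; exact continuous_id
        · simp only [hg, if_neg hk, if_neg hk']; exact continuous_const
    set DA : Set (AddCircle (1:ℝ)) :=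
      (fun x : ℝ => (x : AddCircle (1:ℝ))) '' ((fun x => β + x) '' {x : ℝ | ∃ p q : ℤ, x = p * α + q}) with hDA
    have hDAdense : Dense DA := by
      refine DenseRange.dense_image ?_ continuous_quotient_mk' ?_
      · exact (QuotientAddGroup.mk_surjective).denseRange
      · exact (Homeomorph.addLeft β).isDenseEmbedding.dense_image.mpr (dense_int_combo hα)
    have hsub : g '' DA ⊆ torusQuot d '' {x | ∑ k, a k * x k = c} := by
      rintro _ ⟨_, ⟨_, ⟨w, ⟨p, q, rfl⟩, rfl⟩, rfl⟩, rfl⟩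
      refine ⟨fun k => if k = i then r + (-p : ℤ) else if k = j then β - α * (-p : ℤ) else 0, ?_, ?_⟩
      · simp only [Set.mem_setOf_eq]
        have expand : ∀ k, a k * (if k = i then r + (-p:ℤ) else if k = j then β - α * (-p:ℤ) else 0)
            = (if k = i then a k * (r + (-p:ℤ)) else 0) + (if k = j then a k * (β - α * (-p:ℤ)) else 0) := by
          intro k
          by_cases hk : k = i
          · subst hk; rw [if_pos rfl, if_pos rfl, if_neg hij, add_zero]
          · by_cases hk' : k = j
            · subst hk'; rw [if_neg hk, if_neg hk, if_pos rfl, if_pos rfl, zero_add]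
            · rw [if_neg hk, if_neg hk, if_neg hk', if_neg hk', mul_zero, add_zero]
        rw [Finset.sum_congr rfl fun k _ => expand k, Finset.sum_add_distrib,
          Finset.sum_ite_eq' Finset.univ i, Finset.sum_ite_eq' Finset.univ j,
          if_pos (Finset.mem_univ i), if_pos (Finset.mem_univ j)]
        rw [hβdef, hαdef]
        field_simp
        ring
      · funext k
        simp only [torusQuot, hg]
        by_cases hk : k = i
        · subst hk
          rw [if_pos rfl, if_pos rfl]
          have : ((r + (-p:ℤ) : ℝ) : AddCircle (1:ℝ)) = ((r:ℝ) : AddCircle (1:ℝ)) + (((-p:ℤ) : ℝ) : AddCircle (1:ℝ)) := rfl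
          rw [this, show (((-p:ℤ) : ℝ) : AddCircle (1:ℝ)) = 0 from
            (AddCircle.coe_eq_zero_iff _).mpr ⟨-p, by simp⟩, add_zero]
        · by_cases hk' : k = j
          · subst hk'
            rw [if_neg hk, if_neg hk, if_pos rfl, if_pos rfl]
            have h1 : (β - α * (-p:ℤ) : ℝ) = (β + ((p:ℝ) * α + (q:ℝ))) + (-q:ℤ) := by push_cast; ring
            rw [h1]
            have : (((β + ((p:ℝ) * α + (q:ℝ))) + ((-q:ℤ):ℝ) : ℝ) : AddCircle (1:ℝ))
                = ((β + ((p:ℝ) * α + (q:ℝ)) : ℝ) : AddCircle (1:ℝ)) + (((-q:ℤ):ℝ) : AddCircle (1:ℝ)) := rfl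
            rw [this, show (((-q:ℤ) : ℝ) : AddCircle (1:ℝ)) = 0 from
              (AddCircle.coe_eq_zero_iff _).mpr ⟨-q, by simp⟩, add_zero]
          · simp [hk, hk']
    have h0 : (fun k => if k = i then ((r : ℝ) : AddCircle (1:ℝ)) else 0) = g 0 := by
      funext k
      by_cases hk : k = i
      · simp [hg, hk]
      · by_cases hk' : k = j <;> simp [hg, hk, hk']
    rw [h0, ← hcl.closure_eq]
    have : g 0 ∈ g '' closure DA := ⟨0, hDAdense 0, rfl⟩
    exact closure_mono hsub (image_closure_subset_closure_image hgc this)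
  -- Step 2: extract countable covering of ℝ
  have hr : ∀ r : ℝ, ∃ z : Fin d → ℤ, r = (c - ∑ k, a k * (z k : ℝ)) / a i := by
    intro r
    obtain ⟨x, hxK, hφ⟩ := key r
    have hcoord : ∀ k, ∃ zk : ℤ, x k = (if k = i then r else 0) + zk := by
      intro k
      have := congrFun hφ k
      simp only [torusQuot] at this
      by_cases hk : k = i
      · subst hk
        rw [if_pos rfl] at this ⊢
        have h2 : ((x k - r : ℝ) : AddCircle (1:ℝ)) = 0 := by
          rw [show ((x k - r : ℝ) : AddCircle (1:ℝ)) = ((x k : ℝ) : AddCircle (1:ℝ)) - ((r:ℝ) : AddCircle (1:ℝ)) from rfl, this, sub_self]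
        rw [AddCircle.coe_eq_zero_iff] at h2
        obtain ⟨z, hz⟩ := h2
        exact ⟨z, by rw [zsmul_eq_mul, mul_one] at hz; linarith⟩
      · rw [if_neg hk] at this ⊢
        rw [AddCircle.coe_eq_zero_iff] at this
        obtain ⟨z, hz⟩ := this
        exact ⟨z, by rw [zsmul_eq_mul, mul_one] at hz; linarith⟩
    choose z hz using hcoord
    refine ⟨z, ?_⟩
    have hc : c = ∑ k, a k * ((if k = i then r else 0) + (z k : ℝ)) := by
      rw [← hxK]
      exact (Finset.sum_congr rfl fun k _ => by rw [hz k]).symm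
    have hsplit : ∑ k, a k * ((if k = i then r else 0) + (z k : ℝ))
        = a i * r + ∑ k, a k * (z k : ℝ) := by
      have e : ∀ k, a k * ((if k = i then r else 0) + (z k : ℝ))
          = (if k = i then a k * r else 0) + a k * (z k : ℝ) := by
        intro k
        by_cases hk : k = i
        · rw [if_pos hk, if_pos hk]; ring
        · rw [if_neg hk, if_neg hk]; ring
      rw [Finset.sum_congr rfl fun k _ => e k, Finset.sum_add_distrib,
        Finset.sum_ite_eq' Finset.univ i, if_pos (Finset.mem_univ i)]
    rw [hsplit] at hc
    rw [eq_div_iff hai]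
    linarith [mul_comm (a i) r]
  have : (Set.univ : Set ℝ).Countable := by
    refine Set.Countable.mono ?_ (Set.countable_range fun z : Fin d → ℤ => (c - ∑ k, a k * (z k : ℝ)) / a i)
    rintro r -
    obtain ⟨z, hz⟩ := hr r
    exact ⟨z, hz.symm⟩
  exact not_countable (Set.countable_univ_iff.mp this)

/-- For a nonzero real vector `a` and `c ∈ ℝ`, the image in `T^d` of the hyperplane
`{x | ∑ i, a i * x i = c}` is closed iff all ratios `a i / a j` (with `a j ≠ 0`)
are rational. -/
theorem image_hyperplane_isClosed_iff_rational_ratios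
    (d : ℕ) (a : Fin d → ℝ) (ha : a ≠ 0) (c : ℝ) :
    IsClosed (torusQuot d '' {x | ∑ i, a i * x i = c}) ↔
      ∀ i j, a j ≠ 0 → ∃ q : ℚ, a i / a j = (q : ℝ) := by
  constructor
  · intro hcl i j haj
    by_contra hirr
    exact forward_dir d a c i j haj hirr hcl
  · intro h
    obtain ⟨b, n, s, hs0, hab, hbn⟩ := rational_ratios_to_int_vector d a ha h
    have hset : {x : Fin d → ℝ | ∑ i, a i * x i = c} = {x | ∑ i, (b i : ℝ) * x i = c / s} := by
      ext x
      simp only [Set.mem_setOf_eq]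
      have hsum : ∑ i, a i * x i = s * ∑ i, (b i : ℝ) * x i := by
        rw [Finset.mul_sum]
        exact Finset.sum_congr rfl fun i _ => by rw [hab i]; ring
      rw [hsum, mul_comm s _]
      exact (eq_div_iff hs0).symm
    rw [hset]
    exact isClosed_of_int_vector d b n hbn (c / s)
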